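/- arXiv:1808.03864 — 3 statements merged into one kernel-verified Lean document; each statement's English description precedes it below -/
import Mathlib

section
/- Let f be a nonzero homogeneous polynomial of degree d ≥ 3 in n variables with real coefficients, and let F = (1/d)∇f : ℂ^n → ℂ^n. Let ω = e^{iπ/(d−2)}. Define fix_ℝ(F) = fix(F) ∩ ℝ^n if d is odd, and fix_ℝ(F) = (fix(F) ∪ {conj(ω)·x : x ∈ fix(F)}) ∩ ℝ^n if d is even, where fix(F) = {x ∈ ℂ^n : F(x) = x}. Then ‖f‖_{σ,ℝ} = max{ |f(x)| / ‖x‖₂^d : x ∈ fix_ℝ(F) \ {0} }. -/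
open MvPolynomial

/-- The Euclidean (Hermitian) norm on `ℂⁿ`. -/
noncomputable def euclNorm {n : ℕ} (x : Fin n → ℂ) : ℝ :=
  Real.sqrt (∑ i, ‖x i‖ ^ 2)

/-- The Euclidean norm on `ℝⁿ`. -/
noncomputable def euclNormR {n : ℕ} (x : Fin n → ℝ) : ℝ :=
  Real.sqrt (∑ i, x i ^ 2)

/-- The real spectral norm of `f`: the supremum of `|f(x)|` over the unit sphere of `ℝⁿ`. -/
noncomputable def specNormR {n : ℕ} (f : MvPolynomial (Fin n) ℝ) : ℝ :=
  sSup {r : ℝ | ∃ x : Fin n → ℝ, euclNormR x = 1 ∧ r = |eval x f|}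

/- ### Auxiliary lemmas -/

lemma eval_smul_of_isHomogeneous {R : Type*} [CommSemiring R] {n d : ℕ}
    {φ : MvPolynomial (Fin n) R} (h : φ.IsHomogeneous d) (c : R) (x : Fin n → R) :
    eval (c • x) φ = c ^ d * eval x φ := by
  rw [eval_eq', eval_eq', Finset.mul_sum]
  refine Finset.sum_congr rfl fun m hm => ?_
  have hdeg : m.degree = d := by
    by_contra hne
    exact (mem_support_iff.1 hm) (h.coeff_eq_zero hne)
  have : ∏ i, (c • x) i ^ m i = c ^ d * ∏ i, x i ^ m i := by
    simp only [Pi.smul_apply, smul_eq_mul, mul_pow]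
    rw [Finset.prod_mul_distrib, Finset.prod_pow_eq_pow_sum]
    have hsum : ∑ i, m i = m.degree := by
      rw [Finsupp.degree]
      exact (Finset.sum_subset (Finset.subset_univ _)
        (fun i _ hi => Finsupp.notMem_support_iff.1 hi)).symm
    rw [hsum, hdeg]
  rw [this]; ring

lemma pderiv_isHomogeneous {R : Type*} [CommRing R] {n d : ℕ}
    {φ : MvPolynomial (Fin n) R} (h : φ.IsHomogeneous d) (i : Fin n) :
    (pderiv i φ).IsHomogeneous (d - 1) := by
  have : φ = ∑ s ∈ φ.support, monomial s (coeff s φ) := (support_sum_monomial_coeff φ).symm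
  rw [this, map_sum]
  rw [← mem_homogeneousSubmodule]
  refine Submodule.sum_mem _ fun s hs => ?_
  rw [mem_homogeneousSubmodule, pderiv_monomial]
  rcases eq_or_ne (s i) 0 with h0 | h0
  · simp only [h0, Nat.cast_zero, mul_zero, map_zero]
    exact isHomogeneous_zero _ _ _
  · apply isHomogeneous_monomial
    have hds : s.degree = d := by
      by_contra hne
      exact (mem_support_iff.1 hs) (h.coeff_eq_zero hne)
    have hsub : (s - Finsupp.single i 1) + Finsupp.single i 1 = s := by
      ext j
      rcases eq_or_ne j i with rfl | hj
      · simp [Nat.sub_add_cancel (Nat.one_le_iff_ne_zero.2 h0)]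
      · simp [Finsupp.single_apply, Ne.symm hj]
    have := congrArg Finsupp.degree hsub
    rw [Finsupp.degree_eq_weight_one, map_add, ← Finsupp.degree_eq_weight_one] at this
    have hs1 : (Finsupp.single i 1).degree = 1 := by
      simp [Finsupp.degree_single]
    rw [hs1, hds] at this
    omega

lemma hasStrictFDerivAt_eval {n : ℕ} (x : Fin n → ℝ) (p : MvPolynomial (Fin n) ℝ) :
    HasStrictFDerivAt (fun u => eval u p)
      (∑ i, eval x (pderiv i p) • (ContinuousLinearMap.proj i : (Fin n → ℝ) →L[ℝ] ℝ)) x := by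
  induction p using MvPolynomial.induction_on with
  | C a =>
      have : (∑ i, eval x (pderiv i (C a : MvPolynomial (Fin n) ℝ)) •
          (ContinuousLinearMap.proj i : (Fin n → ℝ) →L[ℝ] ℝ)) = 0 := by
        simp [pderiv_C]
      rw [this]
      simpa using hasStrictFDerivAt_const (a : ℝ) x
  | add p q hp hq =>
      have := hp.add hq
      convert (id this : HasStrictFDerivAt ((fun u => eval u p) + fun u => eval u q)
        (∑ i, eval x (pderiv i p) • (ContinuousLinearMap.proj i : (Fin n → ℝ) →L[ℝ] ℝ) +
          ∑ i, eval x (pderiv i q) • (ContinuousLinearMap.proj i : (Fin n → ℝ) →L[ℝ] ℝ)) x) using 1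
      · funext u; simp
      · rw [← Finset.sum_add_distrib]
        refine Finset.sum_congr rfl fun i _ => ?_
        simp [add_smul]
  | mul_X p i hp =>
      have hXi : HasStrictFDerivAt (fun u : Fin n → ℝ => u i)
          (ContinuousLinearMap.proj i : (Fin n → ℝ) →L[ℝ] ℝ) x :=
        by exact (ContinuousLinearMap.proj i : (Fin n → ℝ) →L[ℝ] ℝ).hasStrictFDerivAt (x := x)
      have := hp.mul hXi
      convert (id this : HasStrictFDerivAt ((fun u => eval u p) * fun u : Fin n → ℝ => u i)
        (eval x p • (ContinuousLinearMap.proj i : (Fin n → ℝ) →L[ℝ] ℝ) +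
          x i • ∑ j, eval x (pderiv j p) • (ContinuousLinearMap.proj j : (Fin n → ℝ) →L[ℝ] ℝ)) x) using 1
      · funext u; simp
      · have hsplit : ∀ j : Fin n, eval x (pderiv j (p * X i)) =
            eval x (pderiv j p) * x i + (if j = i then eval x p else 0) := by
          intro j
          rcases eq_or_ne j i with rfl | hj
          · simp [pderiv_mul, pderiv_X_self]; ring
          · simp [pderiv_mul, pderiv_X_of_ne hj, Pi.single_eq_of_ne (Ne.symm hj), hj, mul_comm]
        ext v
        simp only [ContinuousLinearMap.sum_apply, ContinuousLinearMap.smul_apply,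
          ContinuousLinearMap.proj_apply, ContinuousLinearMap.add_apply, smul_eq_mul, hsplit]
        simp only [add_mul, ite_mul, zero_mul]
        rw [Finset.sum_add_distrib, Finset.sum_ite_eq' Finset.univ i (fun j => eval x p * v j)]
        simp only [Finset.mem_univ, if_true]
        rw [Finset.mul_sum]
        rw [add_comm]
        congr 1
        exact Finset.sum_congr rfl fun j _ => by ring

lemma euler_identity {n d : ℕ} {φ : MvPolynomial (Fin n) ℝ} (h : φ.IsHomogeneous d)
    (x : Fin n → ℝ) : ∑ i, x i * eval x (pderiv i φ) = d * eval x φ := by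
  have hsmul : HasDerivAt (fun t : ℝ => t • x) x 1 := by
    simpa using (hasDerivAt_id (1:ℝ)).smul_const x
  have h1 : HasDerivAt (fun t : ℝ => eval (t • x) φ)
      ((∑ i, eval x (pderiv i φ) • (ContinuousLinearMap.proj i : (Fin n → ℝ) →L[ℝ] ℝ)) x) 1 := by
    have hD := (hasStrictFDerivAt_eval x φ).hasFDerivAt
    rw [show x = (1:ℝ) • x by simp] at hD
    have := hD.comp_hasDerivAt (1:ℝ) (by simpa using hsmul)
    simpa using (id this : HasDerivAt (fun t : ℝ => eval (t • x) φ) _ 1)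
  have h2 : HasDerivAt (fun t : ℝ => t ^ d * eval x φ) ((d : ℝ) * 1 ^ (d - 1) * eval x φ) 1 :=
    (hasDerivAt_pow d 1).mul_const _
  have hfun : (fun t : ℝ => eval (t • x) φ) = fun t : ℝ => t ^ d * eval x φ := by
    funext t; exact eval_smul_of_isHomogeneous h t x
  rw [hfun] at h1
  have := h1.unique h2
  simp only [ContinuousLinearMap.sum_apply, ContinuousLinearMap.smul_apply,
    ContinuousLinearMap.proj_apply, smul_eq_mul, one_pow, mul_one] at this ⊢
  rw [Finset.sum_congr rfl fun i _ => mul_comm (x i) (eval x (pderiv i φ))]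
  rw [this]

lemma eval_ofReal' {n : ℕ} (u : Fin n → ℝ) (p : MvPolynomial (Fin n) ℝ) :
    eval (fun i => (u i : ℂ)) (MvPolynomial.map (algebraMap ℝ ℂ) p) = ((eval u p : ℝ) : ℂ) := by
  rw [eval_map]
  have := eval₂_comp_left (algebraMap ℝ ℂ) (RingHom.id ℝ) u p
  simpa [Function.comp_def] using this.symm

lemma euclNormR_smul {n : ℕ} (t : ℝ) (u : Fin n → ℝ) :
    euclNormR (t • u) = |t| * euclNormR u := by
  unfold euclNormR
  rw [← Real.sqrt_sq_eq_abs, ← Real.sqrt_mul (sq_nonneg t), Finset.mul_sum]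
  congr 1
  exact Finset.sum_congr rfl fun i _ => by simp [mul_pow]

lemma euclNorm_ofReal {n : ℕ} (u : Fin n → ℝ) :
    euclNorm (fun i => (u i : ℂ)) = euclNormR u := by
  unfold euclNorm euclNormR
  congr 1
  exact Finset.sum_congr rfl fun i _ => by
    rw [Complex.norm_real, Real.norm_eq_abs, sq_abs]

lemma continuous_evalR {n : ℕ} (p : MvPolynomial (Fin n) ℝ) :
    Continuous fun u : Fin n → ℝ => eval u p :=
  continuous_iff_continuousAt.2 fun u => (hasStrictFDerivAt_eval u p).continuousAt

lemma continuous_euclNormR {n : ℕ} : Continuous (euclNormR (n := n)) :=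
  Real.continuous_sqrt.comp (continuous_finset_sum _ fun i _ => (continuous_apply i).pow 2)

/-- For a nonzero homogeneous `f` of degree `d ≥ 3` with real coefficients, the real spectral
norm of `f` equals the maximum of `|f(x)|/‖x‖₂^d` over the nonzero real fixed points of
`F = (1/d)∇f`, where for even `d` one also rotates the fixed points by `conj ω`,
`ω = e^{iπ/(d-2)}`. -/
theorem stmt4 {n d : ℕ} (hd : 3 ≤ d) (f : MvPolynomial (Fin n) ℝ) (hf : f ≠ 0)
    (hhom : f.IsHomogeneous d)
    (fC : MvPolynomial (Fin n) ℂ) (hfC : fC = MvPolynomial.map (algebraMap ℝ ℂ) f)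
    (F : (Fin n → ℂ) → (Fin n → ℂ))
    (hF : ∀ x i, F x i = (1 / (d : ℂ)) * eval x (pderiv i fC))
    (ω : ℂ) (hω : ω = Complex.exp ((Real.pi : ℂ) * Complex.I / ((d : ℂ) - 2)))
    (fixR : Set (Fin n → ℂ))
    (hfixR : fixR = (if Odd d then {x | F x = x}
        else {x | F x = x} ∪ (fun x => (starRingEnd ℂ) ω • x) '' {x | F x = x}) ∩
      {x | ∀ i, (x i).im = 0}) :
    IsGreatest {r : ℝ | ∃ x ∈ fixR, x ≠ 0 ∧
        r = ‖eval x fC‖ / euclNorm x ^ d}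
      (specNormR f) := by
  classical
  -- the unit sphere in ℝⁿ
  set S : Set (Fin n → ℝ) := {u | euclNormR u = 1} with hSdef
  have hd0 : d ≠ 0 := by omega
  -- `Fin n` is nonempty
  have hne : Nonempty (Fin n) := by
    by_contra hempty
    have hie : IsEmpty (Fin n) := not_nonempty_iff.mp hempty
    apply hf
    ext m
    have hm : m = 0 := by ext i; exact (hie.false i).elim
    rw [hm, MvPolynomial.coeff_zero]
    by_contra hc
    have h0 := hhom hc
    simp at h0
    omega
  -- continuity and compactness
  have hgcont : Continuous fun u : Fin n → ℝ => |eval u f| := (continuous_evalR f).abs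
  have hScl : IsClosed S := isClosed_eq continuous_euclNormR continuous_const
  have hsum_of_mem : ∀ u ∈ S, ∑ i, u i ^ 2 = 1 := by
    intro u hu
    have : Real.sqrt (∑ i, u i ^ 2) = 1 := hu
    have h := Real.sqrt_eq_one.mp this
    exact h
  have hSb : Bornology.IsBounded S := by
    rw [isBounded_iff_forall_norm_le]
    refine ⟨1, fun u hu => ?_⟩
    rw [pi_norm_le_iff_of_nonneg (by norm_num)]
    intro i
    have hsum := hsum_of_mem u hu
    have h1 : u i ^ 2 ≤ 1 := by
      rw [← hsum]
      exact Finset.single_le_sum (fun j _ => sq_nonneg (u j)) (Finset.mem_univ i)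
    rw [Real.norm_eq_abs]
    exact (sq_le_one_iff_abs_le_one (u i)).mp h1
  have hScompact : IsCompact S := Metric.isCompact_of_isClosed_isBounded hScl hSb
  -- a point on the sphere
  obtain ⟨i₀⟩ := hne
  have hu₀ : euclNormR (Pi.single i₀ 1 : Fin n → ℝ) = 1 := by
    unfold euclNormR
    rw [show (∑ i, (Pi.single i₀ 1 : Fin n → ℝ) i ^ 2) = 1 by
      rw [Finset.sum_eq_single i₀]
      · simp
      · intro j _ hj; simp [Pi.single_eq_of_ne hj]
      · intro h; exact absurd (Finset.mem_univ i₀) h]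
    exact Real.sqrt_one
  have hSne : S.Nonempty := ⟨Pi.single i₀ 1, hu₀⟩
  -- the maximizer
  obtain ⟨x₀, hx₀S, hmax⟩ := hScompact.exists_isMaxOn hSne hgcont.continuousOn
  set M : ℝ := |eval x₀ f| with hMdef
  have hub : ∀ u, euclNormR u = 1 → |eval u f| ≤ M := fun u hu => hmax hu
  have hsum₀ : ∑ i, x₀ i ^ 2 = 1 := hsum_of_mem x₀ hx₀S
  have hspec : specNormR f = M := by
    unfold specNormR
    apply IsGreatest.csSup_eq
    constructor
    · exact ⟨x₀, hx₀S, rfl⟩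
    · rintro r ⟨u, hu, rfl⟩
      exact hub u hu
  -- positivity of M
  have hx₀ne : ∃ j, x₀ j ≠ 0 := by
    by_contra hc
    push_neg at hc
    have : (1:ℝ) = 0 := by rw [← hsum₀]; simp [hc]
    norm_num at this
  have hnormR_pos : ∀ u : Fin n → ℝ, u ≠ 0 → 0 < euclNormR u := by
    intro u hu
    have : ∃ j, u j ≠ 0 := by
      by_contra hc; push_neg at hc; exact hu (funext hc)
    obtain ⟨j, hj⟩ := this
    apply Real.sqrt_pos.2
    apply Finset.sum_pos' (fun i _ => sq_nonneg (u i))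
    exact ⟨j, Finset.mem_univ j, by positivity⟩
  have hMpos : 0 < M := by
    rcases lt_or_eq_of_le (abs_nonneg (eval x₀ f)) with h | h
    · exact h
    have hM0 : M = 0 := h.symm
    exfalso
    apply hf
    apply MvPolynomial.funext
    intro u
    rw [map_zero]
    rcases eq_or_ne u 0 with rfl | hu
    · have := eval_smul_of_isHomogeneous hhom (0:ℝ) (0 : Fin n → ℝ)
      simpa [zero_pow hd0] using this
    · have hρ := hnormR_pos u hu
      set ρ := euclNormR u with hρdef
      have h1 : euclNormR (ρ⁻¹ • u) = 1 := by
        rw [euclNormR_smul, abs_inv, abs_of_pos hρ]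
        field_simp
        exact hρdef.symm
      have h2 := hub _ h1
      rw [hM0] at h2
      have h3 : eval (ρ⁻¹ • u) f = 0 := abs_eq_zero.mp (le_antisymm h2 (abs_nonneg _))
      rw [eval_smul_of_isHomogeneous hhom] at h3
      rcases mul_eq_zero.mp h3 with h4 | h4
      · exact absurd (pow_eq_zero_iff hd0 |>.mp h4) (inv_ne_zero hρ.ne')
      · exact h4
  set c : ℝ := eval x₀ f with hcdef
  have hc0 : c ≠ 0 := by
    intro h
    rw [h, abs_zero] at hMdef
    rw [hMdef] at hMpos
    exact lt_irrefl 0 hMpos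
  -- the constraint polynomial
  set q : MvPolynomial (Fin n) ℝ := ∑ i, X i ^ 2 with hqdef
  have hevalq : ∀ u : Fin n → ℝ, eval u q = ∑ i, u i ^ 2 := by
    intro u; simp [hqdef]
  have hpderivq : ∀ (u : Fin n → ℝ) (i : Fin n), eval u (pderiv i q) = 2 * u i := by
    intro u i
    rw [hqdef, map_sum]
    rw [map_sum]
    rw [Finset.sum_eq_single i]
    · simp [pow_two, pderiv_mul, pderiv_X_self]; ring
    · intro j _ hj
      simp [pow_two, pderiv_mul, pderiv_X_of_ne hj]
    · intro h; exact absurd (Finset.mem_univ i) h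
  -- Lagrange multipliers
  have hextr : IsLocalExtrOn (fun u => eval u f) {u | eval u q = eval x₀ q} x₀ := by
    have hmem : ∀ u, eval u q = eval x₀ q → euclNormR u = 1 := by
      intro u hu
      rw [hevalq, hevalq, hsum₀] at hu
      unfold euclNormR
      rw [hu]; exact Real.sqrt_one
    rcases abs_eq (le_of_lt hMpos) |>.mp rfl with hpos | hneg
    · refine Or.inr (IsMaxOn.localize ?_)
      intro u hu
      have := hub u (hmem u hu)
      simp only [Set.mem_setOf_eq]
      calc eval u f ≤ |eval u f| := le_abs_self _
        _ ≤ M := this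
        _ = eval x₀ f := hpos.symm
    · refine Or.inl (IsMinOn.localize ?_)
      intro u hu
      have := hub u (hmem u hu)
      simp only [Set.mem_setOf_eq]
      calc eval x₀ f = -M := hneg
        _ ≤ -|eval u f| := by linarith
        _ ≤ eval u f := neg_abs_le _
  obtain ⟨a, b, hab, hmul⟩ := hextr.exists_multipliers_of_hasStrictFDerivAt_1d
    (hasStrictFDerivAt_eval x₀ q) (hasStrictFDerivAt_eval x₀ f)
  have happ : ∀ v : Fin n → ℝ,
      a * ∑ i, eval x₀ (pderiv i q) * v i + b * ∑ i, eval x₀ (pderiv i f) * v i = 0 := by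
    intro v
    have := ContinuousLinearMap.ext_iff.1 hmul v
    simpa [ContinuousLinearMap.sum_apply, Finset.mul_sum, mul_assoc] using this
  have h1 : a * 2 + b * (d * c) = 0 := by
    have := happ x₀
    rw [Finset.sum_congr rfl (fun i _ => by rw [hpderivq x₀ i])] at this
    have heuler : ∑ i, eval x₀ (pderiv i f) * x₀ i = d * c := by
      rw [Finset.sum_congr rfl (fun i _ =>
        mul_comm (eval x₀ (pderiv i f)) (x₀ i))]
      exact euler_identity hhom x₀
    rw [heuler] at this
    have hsq : ∑ i, 2 * x₀ i * x₀ i = 2 := by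
      rw [Finset.sum_congr rfl (fun i _ => by rw [mul_assoc, ← pow_two])]
      rw [← Finset.mul_sum, hsum₀, mul_one]
    rw [hsq] at this
    exact this
  have hb : b ≠ 0 := by
    intro hb0
    rw [hb0] at h1
    simp at h1
    exact hab (by simp [Prod.ext_iff, h1, hb0])
  have key : ∀ j, eval x₀ (pderiv j f) = d * c * x₀ j := by
    intro j
    have hsingle := happ (Pi.single j 1)
    have hcollapse : ∀ (g : Fin n → ℝ), ∑ i, g i * (Pi.single j 1 : Fin n → ℝ) i = g j := by
      intro g
      rw [Finset.sum_eq_single j]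
      · simp
      · intro i _ hi; simp [Pi.single_eq_of_ne hi]
      · intro h; exact absurd (Finset.mem_univ j) h
    rw [hcollapse, hcollapse, hpderivq x₀ j] at hsingle
    have h3 : b * (eval x₀ (pderiv j f) - d * c * x₀ j) = 0 := by
      linear_combination hsingle - x₀ j * h1
    rcases mul_eq_zero.mp h3 with h4 | h4
    · exact absurd h4 hb
    · linarith
  -- complexification
  have hfChom : fC.IsHomogeneous d := by rw [hfC]; exact hhom.map _
  set xC : Fin n → ℂ := fun i => (x₀ i : ℂ) with hxCdef
  have hkeyC : ∀ i, eval xC (pderiv i fC) = (d : ℂ) * (c : ℂ) * xC i := by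
    intro i
    rw [hxCdef, hfC, pderiv_map, eval_ofReal' x₀ (pderiv i f), key i]
    push_cast
    ring
  have hdC : (d : ℂ) ≠ 0 := Nat.cast_ne_zero.2 hd0
  have hF' : ∀ (s : ℂ) (i : Fin n), F (s • xC) i = s ^ (d-1) * (c : ℂ) * xC i := by
    intro s i
    rw [hF]
    rw [eval_smul_of_isHomogeneous (pderiv_isHomogeneous hfChom i) s xC, hkeyC i]
    field_simp
  have hval : ∀ t : ℝ, t ≠ 0 →
      ‖eval ((t:ℂ) • xC) fC‖ / euclNorm ((t:ℂ) • xC) ^ d = M := by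
    intro t ht
    have hyx : ((t:ℂ) • xC) = fun i => (((t • x₀ : Fin n → ℝ)) i : ℂ) := by
      funext i; simp [hxCdef, Complex.ofReal_mul]
    have hx₀norm : euclNormR x₀ = 1 := hx₀S
    rw [hyx, hfC, eval_ofReal', euclNorm_ofReal, euclNormR_smul,
      eval_smul_of_isHomogeneous hhom t x₀, hx₀norm, mul_one]
    rw [Complex.norm_real, Real.norm_eq_abs, abs_mul, abs_pow]
    have hne' : |t| ^ d ≠ 0 := pow_ne_zero _ (abs_ne_zero.2 ht)
    rw [mul_comm, mul_div_assoc, div_self hne', mul_one]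
  obtain ⟨j₀, hj₀⟩ := hx₀ne
  have hyne : ∀ t : ℝ, t ≠ 0 → ((t:ℂ) • xC) ≠ 0 := by
    intro t ht h0
    have h1 : (t:ℂ) * (x₀ j₀ : ℂ) = 0 := by
      have := congrFun h0 j₀
      simpa [hxCdef] using this
    rcases mul_eq_zero.mp h1 with h | h
    · exact ht (Complex.ofReal_eq_zero.mp h)
    · exact hj₀ (Complex.ofReal_eq_zero.mp h)
  have hyim : ∀ t : ℝ, ∀ i, (((t:ℂ) • xC) i).im = 0 := by
    intro t i
    simp [hxCdef, ← Complex.ofReal_mul]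
  have hmemfix : ∀ y : Fin n → ℂ, F y = y → (∀ i, (y i).im = 0) → y ∈ fixR := by
    intro y hy him
    rw [hfixR]
    refine ⟨?_, him⟩
    split_ifs with h
    · exact hy
    · exact Or.inl hy
  have hd2ne : ((d - 2 : ℕ) : ℝ) ≠ 0 := Nat.cast_ne_zero.2 (by omega)
  -- construction of a fixed point with value M, for `t` with `t^(d-2) * c = 1`
  have hfix_of_t : ∀ t : ℝ, t ≠ 0 → t ^ (d-2) * c = 1 → F ((t:ℂ) • xC) = (t:ℂ) • xC := by
    intro t ht htc
    funext i
    rw [hF' t i]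
    have hcast : ((t:ℂ)) ^ (d-2) * (c:ℂ) = 1 := by exact_mod_cast congrArg (fun x : ℝ => (x : ℂ)) htc
    show (t:ℂ) ^ (d-1) * (c:ℂ) * xC i = (t:ℂ) * xC i
    rw [show d - 1 = (d-2)+1 from by omega]
    linear_combination ((t:ℂ) * xC i) * hcast
  constructor
  · -- membership
    rw [hspec]
    rcases lt_or_gt_of_ne hc0 with hcneg | hcpos
    · -- c < 0
      by_cases hodd : Odd d
      · -- d odd: take a negative root
        set s : ℝ := ((-c)⁻¹) ^ ((((d-2:ℕ)):ℝ)⁻¹) with hsdef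
        have hspos : 0 < s := Real.rpow_pos_of_pos (inv_pos.2 (neg_pos.2 hcneg)) _
        have hspow : s ^ (d-2) = (-c)⁻¹ := by
          rw [hsdef, ← Real.rpow_natCast (((-c)⁻¹) ^ ((((d-2:ℕ)):ℝ)⁻¹)) (d-2),
            ← Real.rpow_mul (le_of_lt (inv_pos.2 (neg_pos.2 hcneg))),
            inv_mul_cancel₀ hd2ne, Real.rpow_one]
        have hd2odd : Odd (d-2) := by
          rcases hodd with ⟨k, hk⟩
          exact ⟨k - 1, by omega⟩
        have htc : (-s) ^ (d-2) * c = 1 := by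
          rw [Odd.neg_pow hd2odd, hspow, inv_neg]
          field_simp
        have ht : (-s : ℝ) ≠ 0 := neg_ne_zero.2 (ne_of_gt hspos)
        exact ⟨((-s : ℝ):ℂ) • xC,
          hmemfix _ (hfix_of_t (-s) ht htc) (hyim (-s)), hyne (-s) ht, (hval (-s) ht).symm⟩
      · -- d even: use the rotation by ω
        set t : ℝ := ((-c)⁻¹) ^ ((((d-2:ℕ)):ℝ)⁻¹) with htdef
        have htpos : 0 < t := Real.rpow_pos_of_pos (inv_pos.2 (neg_pos.2 hcneg)) _
        have ht : t ≠ 0 := ne_of_gt htpos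
        have htpow : t ^ (d-2) = (-c)⁻¹ := by
          rw [htdef, ← Real.rpow_natCast (((-c)⁻¹) ^ ((((d-2:ℕ)):ℝ)⁻¹)) (d-2),
            ← Real.rpow_mul (le_of_lt (inv_pos.2 (neg_pos.2 hcneg))),
            inv_mul_cancel₀ hd2ne, Real.rpow_one]
        have htc : t ^ (d-2) * c = -1 := by
          rw [htpow, inv_neg]
          field_simp
        have hcast : ((t:ℂ)) ^ (d-2) * (c:ℂ) = -1 := by
          exact_mod_cast congrArg (fun x : ℝ => (x : ℂ)) htc
        have hdd2 : ((d - 2 : ℕ) : ℂ) = (d : ℂ) - 2 := by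
          push_cast [Nat.cast_sub (show 2 ≤ d by omega)]
          ring
        have hd2C : ((d:ℂ) - 2) ≠ 0 := by
          rw [← hdd2]
          exact_mod_cast Nat.cast_ne_zero.2 (show d - 2 ≠ 0 by omega)
        have hω2 : ω ^ (d-2) = -1 := by
          rw [hω, ← Complex.exp_nat_mul]
          rw [show ((d-2:ℕ):ℂ) * ((Real.pi:ℂ) * Complex.I / ((d:ℂ)-2)) =
              (Real.pi:ℂ) * Complex.I by rw [hdd2]; field_simp]
          exact Complex.exp_pi_mul_I
        have hz : F ((ω * (t:ℂ)) • xC) = (ω * (t:ℂ)) • xC := by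
          funext i
          rw [hF' (ω * (t:ℂ)) i]
          show (ω * (t:ℂ)) ^ (d-1) * (c:ℂ) * xC i = (ω * (t:ℂ)) * xC i
          rw [show d - 1 = (d-2)+1 from by omega]
          linear_combination (ω * (t:ℂ) * xC i * (t:ℂ)^(d-2) * (c:ℂ)) * hω2 -
            (ω * (t:ℂ) * xC i) * hcast
        have hωabs : ‖ω‖ = 1 := by
          rw [hω, Complex.norm_exp]
          have hre : ((Real.pi:ℂ) * Complex.I / ((d:ℂ)-2)).re = 0 := by
            simp [Complex.div_re, Complex.mul_re, Complex.mul_im, Complex.sub_re,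
              Complex.sub_im]
          rw [hre, Real.exp_zero]
        have hconj : (starRingEnd ℂ) ω • ((ω * (t:ℂ)) • xC) = ((t:ℝ):ℂ) • xC := by
          rw [smul_smul]
          congr 1
          have h1 : (starRingEnd ℂ) ω * ω = 1 := by
            rw [mul_comm, Complex.mul_conj]
            rw [Complex.normSq_eq_norm_sq, hωabs]
            norm_num
          calc (starRingEnd ℂ) ω * (ω * (t:ℂ)) = ((starRingEnd ℂ) ω * ω) * (t:ℂ) := by ring
            _ = (t:ℂ) := by rw [h1, one_mul]
        refine ⟨((t:ℝ):ℂ) • xC, ?_, hyne t ht, (hval t ht).symm⟩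
        rw [hfixR]
        refine ⟨?_, hyim t⟩
        rw [if_neg hodd]
        exact Or.inr ⟨(ω * (t:ℂ)) • xC, hz, hconj⟩
    · -- c > 0
      set t : ℝ := (c⁻¹) ^ ((((d-2:ℕ)):ℝ)⁻¹) with htdef
      have htpos : 0 < t := Real.rpow_pos_of_pos (inv_pos.2 hcpos) _
      have ht : t ≠ 0 := ne_of_gt htpos
      have htpow : t ^ (d-2) = c⁻¹ := by
        rw [htdef, ← Real.rpow_natCast ((c⁻¹) ^ ((((d-2:ℕ)):ℝ)⁻¹)) (d-2),
          ← Real.rpow_mul (le_of_lt (inv_pos.2 hcpos)),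
          inv_mul_cancel₀ hd2ne, Real.rpow_one]
      have htc : t ^ (d-2) * c = 1 := by rw [htpow]; field_simp
      exact ⟨((t:ℝ):ℂ) • xC,
        hmemfix _ (hfix_of_t t ht htc) (hyim t), hyne t ht, (hval t ht).symm⟩
  · -- upper bound
    rintro r ⟨x, hxfix, hx0, rfl⟩
    rw [hfixR] at hxfix
    obtain ⟨-, him⟩ := hxfix
    set u : Fin n → ℝ := fun i => (x i).re with hudef
    have hxu : x = fun i => ((u i : ℝ) : ℂ) := by
      funext i
      apply Complex.ext
      · simp [hudef]
      · simp [hudef, him i]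
    have hu0 : u ≠ 0 := by
      intro h
      apply hx0
      rw [hxu, h]
      funext i
      simp
    have hρ : 0 < euclNormR u := hnormR_pos u hu0
    have h1 : euclNormR ((euclNormR u)⁻¹ • u) = 1 := by
      rw [euclNormR_smul, abs_inv, abs_of_pos hρ]
      field_simp
    have h2 := hub _ h1
    rw [eval_smul_of_isHomogeneous hhom] at h2
    rw [abs_mul, abs_pow, abs_inv, abs_of_pos hρ] at h2
    rw [hspec, hxu, hfC, eval_ofReal', euclNorm_ofReal, Complex.norm_real, Real.norm_eq_abs]
    calc |eval u f| / euclNormR u ^ d = (euclNormR u)⁻¹ ^ d * |eval u f| := by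
          rw [div_eq_mul_inv, mul_comm, inv_pow]
      _ ≤ M := h2
end

section
/- Let f be a nonzero homogeneous polynomial of degree d ≥ 3 in n complex variables. Let F = (1/d)∇f, F̄(x) = conj(F(conj(x))), and H = F̄ ∘ F. Then: (i) afix(F) = {x ∈ ℂ^n : F(x) = conj(x)} is contained in fix(H) = {x ∈ ℂ^n : H(x) = x}; (ii) x ∈ fix(H) if and only if there exists y ∈ ℂ^n with F(x) = y and F̄(y) = x; (iii) ‖f‖_{σ,ℂ} = max{ |f(x)| / ‖x‖₂^d : x ∈ fix(H) \ {0} }. -/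
open MvPolynomial

/-- The complex spectral norm of `f`: the supremum of `|f(x)|` over the unit sphere of `ℂⁿ`. -/
noncomputable def specNorm {n : ℕ} (f : MvPolynomial (Fin n) ℂ) : ℝ :=
  sSup {r : ℝ | ∃ x : Fin n → ℂ, euclNorm x = 1 ∧ r = ‖eval x f‖}

/-- The map `F = (1/d)∇f : ℂⁿ → ℂⁿ`. -/
noncomputable def Fmap (d : ℕ) {n : ℕ} (f : MvPolynomial (Fin n) ℂ) (x : Fin n → ℂ) :
    Fin n → ℂ :=
  fun i => (1 / (d : ℂ)) * eval x (pderiv i f)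

/-- The map `F̄(x) = conj (F (conj x))`. -/
noncomputable def Fbar (d : ℕ) {n : ℕ} (f : MvPolynomial (Fin n) ℂ) (x : Fin n → ℂ) :
    Fin n → ℂ :=
  star (Fmap d f (star x))

/-- The map `H = F̄ ∘ F`. -/
noncomputable def Hmap (d : ℕ) {n : ℕ} (f : MvPolynomial (Fin n) ℂ) (x : Fin n → ℂ) :
    Fin n → ℂ :=
  Fbar d f (Fmap d f x)


set_option maxHeartbeats 1000000
section Aux
noncomputable def evalD {n : ℕ} (f : MvPolynomial (Fin n) ℂ) (x : Fin n → ℂ) :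
    (Fin n → ℂ) →L[ℂ] ℂ :=
  ∑ i, eval x (pderiv i f) • (ContinuousLinearMap.proj i)

lemma evalD_apply {n : ℕ} (f : MvPolynomial (Fin n) ℂ) (x v : Fin n → ℂ) :
    evalD f x v = ∑ i, eval x (pderiv i f) * v i := by
  simp [evalD]

lemma hasFDerivAt_eval {n : ℕ} (f : MvPolynomial (Fin n) ℂ) (x : Fin n → ℂ) :
    HasFDerivAt (fun y => eval y f) (evalD f x) x := by
  induction f using MvPolynomial.induction_on with
  | C a =>
      have h0 : evalD (C a) x = 0 := by
        ext v; simp [evalD_apply, pderiv_C]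
      simpa [h0, eval_C] using hasFDerivAt_const a x
  | add p q hp hq =>
      have h0 : evalD (p + q) x = evalD p x + evalD q x := by
        ext v; simp [evalD_apply, add_mul, Finset.sum_add_distrib]
      have := hp.add hq
      have e : (fun y => eval y (p + q)) = fun y => eval y p + eval y q := by funext y; simp
      rw [h0, e]; exact this
  | mul_X p j hp =>
      have hXj : HasFDerivAt (fun y : Fin n → ℂ => y j)
          (ContinuousLinearMap.proj j : (Fin n → ℂ) →L[ℂ] ℂ) x :=
        (ContinuousLinearMap.proj (R := ℂ) (φ := fun _ : Fin n => ℂ) j).hasFDerivAt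
      have h := hp.mul hXj
      have h0 : evalD (p * X j) x
          = eval x p • (ContinuousLinearMap.proj j : (Fin n → ℂ) →L[ℂ] ℂ) + x j • evalD p x := by
        ext v
        classical
        simp only [evalD_apply, pderiv_mul, map_add, eval_mul, eval_X, add_mul,
          Finset.sum_add_distrib, ContinuousLinearMap.add_apply,
          ContinuousLinearMap.smul_apply, ContinuousLinearMap.proj_apply, smul_eq_mul,
          Finset.mul_sum]
        rw [add_comm]
        congr 1
        · rw [Finset.sum_eq_single j]
          · simp
          · intro i _ hij
            simp [pderiv_X_of_ne (Ne.symm hij)]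
          · simp
        · apply Finset.sum_congr rfl
          intro i _
          ring
      have e : (fun y => eval y (p * X j)) = fun y => eval y p * y j := by funext y; simp
      rw [h0, e]; exact h

lemma euclNorm_nonneg {n : ℕ} (x : Fin n → ℂ) : 0 ≤ euclNorm x := Real.sqrt_nonneg _

lemma euclNorm_eq_zero {n : ℕ} {x : Fin n → ℂ} : euclNorm x = 0 ↔ x = 0 := by
  unfold euclNorm
  rw [Real.sqrt_eq_zero (by positivity)]
  constructor
  · intro h
    funext i
    have h2 := (Finset.sum_eq_zero_iff_of_nonneg (by intro i _; positivity)).mp h i (Finset.mem_univ i)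
    have : ‖x i‖ = 0 := by nlinarith [norm_nonneg (x i)]
    simpa using this
  · intro h; subst h; simp

lemma euclNorm_smul {n : ℕ} (c : ℂ) (x : Fin n → ℂ) :
    euclNorm (c • x) = ‖c‖ * euclNorm x := by
  unfold euclNorm
  rw [← Real.sqrt_sq (norm_nonneg c), ← Real.sqrt_mul (by positivity), Finset.mul_sum]
  congr 1
  apply Finset.sum_congr rfl
  intro i _
  simp [mul_pow]

lemma eval_smul_homog {n d : ℕ} {f : MvPolynomial (Fin n) ℂ} (hhom : f.IsHomogeneous d)
    (c : ℂ) (x : Fin n → ℂ) : eval (c • x) f = c ^ d * eval x f := by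
  rw [eval_eq, eval_eq, Finset.mul_sum]
  apply Finset.sum_congr rfl
  intro m hm
  have hdeg : m.degree = d := by
    by_contra h
    exact (mem_support_iff.mp hm) (hhom.coeff_eq_zero h)
  have : ∏ i ∈ m.support, (c • x) i ^ m i
      = c ^ d * ∏ i ∈ m.support, x i ^ m i := by
    have : ∏ i ∈ m.support, (c • x) i ^ m i
        = (∏ i ∈ m.support, c ^ m i) * ∏ i ∈ m.support, x i ^ m i := by
      rw [← Finset.prod_mul_distrib]
      apply Finset.prod_congr rfl
      intro i _
      simp [mul_pow]
    have hsum : ∑ i ∈ m.support, m i = d := by rw [← hdeg]; rfl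
    rw [this, Finset.prod_pow_eq_pow_sum, hsum]
  rw [this]; ring

lemma evalD_single {n : ℕ} (f : MvPolynomial (Fin n) ℂ) (x : Fin n → ℂ) (i : Fin n) :
    evalD f x (Pi.single i 1) = eval x (pderiv i f) := by
  classical
  rw [evalD_apply, Finset.sum_eq_single i]
  · simp
  · intro j _ hj; simp [Pi.single_eq_of_ne hj]
  · simp

lemma eval_pderiv_smul {n d : ℕ} (hd : 1 ≤ d) {f : MvPolynomial (Fin n) ℂ}
    (hhom : f.IsHomogeneous d) {c : ℂ} (hc : c ≠ 0) (x : Fin n → ℂ) (i : Fin n) :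
    eval (c • x) (pderiv i f) = c ^ (d - 1) * eval x (pderiv i f) := by
  have h1 : HasFDerivAt (fun y : Fin n → ℂ => eval (c • y) f)
      ((evalD f (c • x)).comp (c • ContinuousLinearMap.id ℂ (Fin n → ℂ))) x := by
    have hin : HasFDerivAt (fun y : Fin n → ℂ => c • y)
        (c • ContinuousLinearMap.id ℂ (Fin n → ℂ)) x :=
      (c • ContinuousLinearMap.id ℂ (Fin n → ℂ)).hasFDerivAt
    exact (hasFDerivAt_eval f (c • x)).comp x hin
  have h2 : HasFDerivAt (fun y : Fin n → ℂ => eval (c • y) f)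
      (c ^ d • evalD f x) x := by
    have heval : (fun y : Fin n → ℂ => eval (c • y) f) = fun y => c ^ d * eval y f := by
      funext y; exact eval_smul_homog hhom c y
    rw [heval]
    exact (hasFDerivAt_eval f x).const_mul (c ^ d)
  have heq := h1.unique h2
  have happ : c * eval (c • x) (pderiv i f) = c ^ d * eval x (pderiv i f) := by
    have h3 := congrArg (fun L : (Fin n → ℂ) →L[ℂ] ℂ => L (Pi.single i 1)) heq
    simpa [ContinuousLinearMap.comp_apply, ContinuousLinearMap.smul_apply, map_smul,
      evalD_single, smul_eq_mul] using h3
  have hpow : c ^ d = c * c ^ (d - 1) := by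
    rw [← pow_succ']
    congr 1
    omega
  rw [hpow, mul_assoc] at happ
  exact mul_left_cancel₀ hc happ

lemma euclNorm_continuous {n : ℕ} : Continuous (euclNorm (n := n)) := by
  apply Real.continuous_sqrt.comp
  exact continuous_finset_sum _ fun i _ =>
    (continuous_norm.comp (continuous_apply i)).pow 2

lemma abs_apply_le_euclNorm {n : ℕ} (x : Fin n → ℂ) (i : Fin n) :
    ‖x i‖ ≤ euclNorm x := by
  unfold euclNorm
  rw [← Real.sqrt_sq (norm_nonneg (x i))]
  apply Real.sqrt_le_sqrt
  exact Finset.single_le_sum (f := fun j => ‖x j‖ ^ 2)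
    (fun j _ => by positivity) (Finset.mem_univ i)

lemma specNorm_spec {n d : ℕ} (hd : 1 ≤ d) (f : MvPolynomial (Fin n) ℂ) (hf : f ≠ 0)
    (hhom : f.IsHomogeneous d) :
    ∃ x1 : Fin n → ℂ, euclNorm x1 = 1 ∧ specNorm f = ‖eval x1 f‖ ∧
      0 < specNorm f ∧
      ∀ y : Fin n → ℂ, ‖eval y f‖ ≤ specNorm f * euclNorm y ^ d := by
  classical
  -- a point where f is nonzero
  obtain ⟨a, ha⟩ : ∃ a : Fin n → ℂ, eval a f ≠ 0 := by
    by_contra h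
    push_neg at h
    exact hf (MvPolynomial.funext fun x => by simp [h x])
  have heval0 : ∀ g : MvPolynomial (Fin n) ℂ, g.IsHomogeneous d → eval (0 : Fin n → ℂ) g = 0 := by
    intro g hg
    rw [eval_zero, constantCoeff_eq]
    exact hg.coeff_eq_zero (by simp [map_zero]; omega)
  have ha0 : a ≠ 0 := fun h => ha (h ▸ heval0 f hhom)
  have hra : 0 < euclNorm a := by
    rcases lt_or_eq_of_le (euclNorm_nonneg a) with h | h
    · exact h
    · exact absurd (euclNorm_eq_zero.mp h.symm) ha0
  -- the unit sphere
  set S : Set (Fin n → ℂ) := {x | euclNorm x = 1} with hS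
  have hSne : S.Nonempty := by
    refine ⟨((euclNorm a : ℂ))⁻¹ • a, ?_⟩
    have : euclNorm (((euclNorm a : ℂ))⁻¹ • a) = ‖((euclNorm a : ℂ))⁻¹‖ * euclNorm a :=
      euclNorm_smul _ _
    rw [hS]
    simp only [Set.mem_setOf_eq, this, norm_inv, Complex.norm_real, Real.norm_eq_abs,
      abs_of_pos hra]
    field_simp
  have hScomp : IsCompact S := by
    have hclosed : IsClosed S := isClosed_singleton.preimage euclNorm_continuous
    refine Metric.isCompact_of_isClosed_isBounded hclosed ?_
    rw [Metric.isBounded_iff_subset_closedBall 0]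
    refine ⟨1, fun x hx => ?_⟩
    rw [Metric.mem_closedBall, dist_zero_right]
    rw [pi_norm_le_iff_of_nonneg zero_le_one]
    intro i
    calc ‖x i‖ = ‖x i‖ := rfl
    _ ≤ euclNorm x := abs_apply_le_euclNorm x i
    _ = 1 := hx
  obtain ⟨x1, hx1S, hx1max⟩ := hScomp.exists_isMaxOn hSne
    ((continuous_norm.comp (continuous_eval (p := f))).continuousOn)
  have hgreat : IsGreatest
      {r : ℝ | ∃ x : Fin n → ℂ, euclNorm x = 1 ∧ r = ‖eval x f‖}
      (‖eval x1 f‖) := by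
    constructor
    · exact ⟨x1, hx1S, rfl⟩
    · rintro r ⟨x, hx, rfl⟩
      exact hx1max hx
  have hspec : specNorm f = ‖eval x1 f‖ := hgreat.csSup_eq
  -- the global bound
  have hub : ∀ y : Fin n → ℂ, ‖eval y f‖ ≤
      ‖eval x1 f‖ * euclNorm y ^ d := by
    intro y
    rcases eq_or_ne y 0 with rfl | hy
    · rw [heval0 f hhom]
      simp only [norm_zero]
      exact mul_nonneg (norm_nonneg _) (pow_nonneg (euclNorm_nonneg _) d)
    · have hry : 0 < euclNorm y := by
        rcases lt_or_eq_of_le (euclNorm_nonneg y) with h | h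
        · exact h
        · exact absurd (euclNorm_eq_zero.mp h.symm) hy
      set x : Fin n → ℂ := ((euclNorm y : ℂ))⁻¹ • y with hx
      have hxS : euclNorm x = 1 := by
        rw [hx, euclNorm_smul]
        simp only [norm_inv, Complex.norm_real, Real.norm_eq_abs, abs_of_pos hry]
        field_simp
      have hevalx : eval x f = ((euclNorm y : ℂ))⁻¹ ^ d * eval y f :=
        eval_smul_homog hhom _ y
      have h1 : ‖eval x f‖ ≤ ‖eval x1 f‖ := hx1max hxS
      rw [hevalx] at h1
      rw [norm_mul, norm_pow, norm_inv, Complex.norm_real, Real.norm_eq_abs, abs_of_pos hry] at h1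
      have h2 : (euclNorm y)⁻¹ ^ d * ‖eval y f‖ ≤ ‖eval x1 f‖ := h1
      calc ‖eval y f‖
          = ((euclNorm y)⁻¹ ^ d * ‖eval y f‖) * euclNorm y ^ d := by
            rw [inv_pow, inv_mul_eq_div, div_mul_cancel₀ _ (by positivity)]
        _ ≤ ‖eval x1 f‖ * euclNorm y ^ d := by
            apply mul_le_mul_of_nonneg_right h2 (by positivity)
  have hpos : 0 < ‖eval x1 f‖ := by
    have := hub a
    have h3 : 0 < ‖eval a f‖ := by
      simpa [norm_pos_iff] using ha
    nlinarith [euclNorm_nonneg a, pow_pos hra d]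
  exact ⟨x1, hx1S, hspec, hspec ▸ hpos, by rw [hspec]; exact hub⟩

lemma gradient_condition {n d : ℕ} (hd : 1 ≤ d) {f : MvPolynomial (Fin n) ℂ}
    (hhom : f.IsHomogeneous d) {x0 : Fin n → ℂ} (hx0 : euclNorm x0 = 1)
    {lam : ℝ} (hval : eval x0 f = (lam : ℂ))
    (hub : ∀ y : Fin n → ℂ, ‖eval y f‖ ≤ lam * euclNorm y ^ d) :
    ∀ j, eval x0 (pderiv j f) = ((lam * d : ℝ) : ℂ) * (starRingEnd ℂ) (x0 j) := by
  classical
  have hsum1 : ∑ i, ‖x0 i‖ ^ 2 = 1 := by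
    have h := hx0
    rw [euclNorm] at h
    exact Real.sqrt_eq_one.mp h
  -- the key directional derivative identity
  have key : ∀ v : Fin n → ℂ,
      (evalD f x0 v).re = lam * d * (∑ i, (starRingEnd ℂ) (x0 i) * v i).re := by
    intro v
    set A : ℝ := (∑ i, (starRingEnd ℂ) (x0 i) * v i).re with hA
    set B : ℝ := ∑ i, ‖v i‖ ^ 2 with hB
    set q : ℝ → ℝ := fun t => 1 + 2 * A * t + B * t ^ 2 with hqdef
    have hq : ∀ t : ℝ, ∑ i, ‖(x0 + t • v) i‖ ^ 2 = q t := by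
      intro t
      have hterm : ∀ i, ‖(x0 + t • v) i‖ ^ 2 =
          ‖x0 i‖ ^ 2 + t * (2 * ((starRingEnd ℂ) (x0 i) * v i).re)
            + t ^ 2 * ‖v i‖ ^ 2 := by
        intro i
        simp only [Pi.add_apply, Pi.smul_apply, Complex.real_smul, Complex.sq_norm,
          Complex.normSq_apply, Complex.add_re, Complex.add_im, Complex.mul_re,
          Complex.mul_im, Complex.ofReal_re, Complex.ofReal_im, Complex.conj_re,
          Complex.conj_im]
        ring
      have h2 : ∑ i, t * (2 * ((starRingEnd ℂ) (x0 i) * v i).re) = t * (2 * A) := by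
        rw [hA, Complex.re_sum, ← Finset.mul_sum, ← Finset.mul_sum]
      have h3 : ∑ i, t ^ 2 * ‖v i‖ ^ 2 = t ^ 2 * B := by
        rw [hB, ← Finset.mul_sum]
      rw [Finset.sum_congr rfl fun i _ => hterm i, Finset.sum_add_distrib,
        Finset.sum_add_distrib, hsum1, h2, h3]
      simp only [hqdef]
      ring
    have hqnn : ∀ t : ℝ, 0 ≤ q t := by
      intro t
      have h : (0:ℝ) ≤ ∑ i, ‖(x0 + t • v) i‖ ^ 2 :=
        Finset.sum_nonneg fun i _ => sq_nonneg _
      rwa [hq t] at h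
    have hnorm : ∀ t : ℝ, euclNorm (x0 + t • v) ^ d = q t ^ ((d : ℝ) / 2) := by
      intro t
      rw [euclNorm, hq t, Real.sqrt_eq_rpow, ← Real.rpow_natCast (q t ^ ((1:ℝ)/2)) d,
        ← Real.rpow_mul (hqnn t)]
      congr 1
      ring
    set φ : ℝ → ℝ := fun t => (eval (x0 + t • v) f).re - lam * q t ^ ((d : ℝ) / 2) with hφdef
    have hφ0 : φ 0 = 0 := by
      have hq0 : q 0 = 1 := by simp [hqdef]
      simp [hφdef, hq0, hval, Real.one_rpow]
    have hφle : ∀ t, φ t ≤ 0 := by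
      intro t
      have h1 : (eval (x0 + t • v) f).re ≤ ‖eval (x0 + t • v) f‖ :=
        Complex.re_le_norm _
      have h2 := hub (x0 + t • v)
      rw [hnorm t] at h2
      simp only [hφdef]
      linarith
    have hlocmax : IsLocalMax φ 0 :=
      Filter.Eventually.of_forall fun t => (hφle t).trans_eq hφ0.symm
    -- derivative of the first part
    have hline : HasDerivAt (fun t : ℝ => x0 + t • v) v 0 := by
      simpa using ((hasDerivAt_id (0:ℝ)).smul_const v).const_add x0
    have heval' : HasDerivAt (fun t : ℝ => eval (x0 + t • v) f)
        ((evalD f x0).restrictScalars ℝ v) 0 := by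
      have hx0eq : x0 + (0:ℝ) • v = x0 := by simp
      have hF : HasFDerivAt (fun y => eval y f) ((evalD f x0).restrictScalars ℝ)
          (x0 + (0:ℝ) • v) := by
        rw [hx0eq]
        exact (hasFDerivAt_eval f x0).restrictScalars ℝ
      exact hF.comp_hasDerivAt 0 hline
    have hre : HasDerivAt (fun t : ℝ => (eval (x0 + t • v) f).re) ((evalD f x0 v).re) 0 := by
      have h := (Complex.reCLM.hasFDerivAt.comp_hasDerivAt 0 heval')
      exact h
    -- derivative of q
    have hq' : HasDerivAt q (2 * A) 0 := by
      have h1 : HasDerivAt (fun t : ℝ => 2 * A * t) (2 * A) 0 := by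
        simpa using (hasDerivAt_id (0:ℝ)).const_mul (2 * A)
      have h2 : HasDerivAt (fun t : ℝ => B * t ^ 2) (0 : ℝ) 0 := by
        simpa using (hasDerivAt_pow 2 (0:ℝ)).const_mul B
      have hfun : q = fun t : ℝ => 1 + (2 * A * t + B * t ^ 2) := by
        funext t
        simp only [hqdef]
        ring
      rw [hfun]
      simpa using (h1.add h2).const_add 1
    have hq0 : q 0 = 1 := by simp [hqdef]
    have hrpow : HasDerivAt (fun t : ℝ => q t ^ ((d:ℝ)/2))
        (((d:ℝ)/2) * q 0 ^ ((d:ℝ)/2 - 1) * (2 * A)) 0 := by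
      have h := (Real.hasDerivAt_rpow_const (x := q 0) (p := (d:ℝ)/2)
        (Or.inl (by rw [hq0]; norm_num))).comp 0 hq'
      exact h
    have hφ' : HasDerivAt φ ((evalD f x0 v).re - lam * (((d:ℝ)/2) * q 0 ^ ((d:ℝ)/2 - 1) * (2 * A))) 0 :=
      hre.sub (hrpow.const_mul lam)
    have hzero := hlocmax.hasDerivAt_eq_zero hφ'
    rw [hq0, Real.one_rpow] at hzero
    have : (evalD f x0 v).re = lam * (((d:ℝ)/2) * (2 * A)) := by linarith
    rw [this, hA]
    ring
  intro j
  have h1 := key (Pi.single j 1)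
  have h2 := key (Pi.single j Complex.I)
  have e1 : evalD f x0 (Pi.single j 1) = eval x0 (pderiv j f) := evalD_single f x0 j
  have e2 : evalD f x0 (Pi.single j Complex.I) = Complex.I * eval x0 (pderiv j f) := by
    have hsingle : (Pi.single j Complex.I : Fin n → ℂ)
        = Complex.I • (Pi.single j 1 : Fin n → ℂ) := by
      have h := Pi.single_smul (f := fun _ : Fin n => ℂ) j Complex.I (1:ℂ)
      simpa using h
    rw [hsingle, map_smul, evalD_single, smul_eq_mul]
  have s1 : (∑ i, (starRingEnd ℂ) (x0 i) * (Pi.single j (1:ℂ) : Fin n → ℂ) i) = (starRingEnd ℂ) (x0 j) := by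
    rw [Finset.sum_eq_single j]
    · simp
    · intro i _ hij; simp [Pi.single_eq_of_ne hij]
    · simp
  have s2 : (∑ i, (starRingEnd ℂ) (x0 i) * (Pi.single j Complex.I : Fin n → ℂ) i)
      = (starRingEnd ℂ) (x0 j) * Complex.I := by
    rw [Finset.sum_eq_single j]
    · simp
    · intro i _ hij; simp [Pi.single_eq_of_ne hij]
    · simp
  rw [e1, s1] at h1
  rw [e2, s2] at h2
  apply Complex.ext
  · simpa using h1
  · simp only [Complex.mul_re, Complex.I_re, Complex.I_im, Complex.mul_im] at h2 ⊢
    simp only [Complex.ofReal_re, Complex.ofReal_im]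
    nlinarith [h2]

lemma Fmap_smul {n d : ℕ} (hd1 : 1 ≤ d) {f : MvPolynomial (Fin n) ℂ}
    (hhom : f.IsHomogeneous d) {c : ℂ} (hc : c ≠ 0) (x : Fin n → ℂ) :
    Fmap d f (c • x) = c ^ (d - 1) • Fmap d f x := by
  funext i
  unfold Fmap
  rw [eval_pderiv_smul hd1 hhom hc x i]
  simp only [Pi.smul_apply, smul_eq_mul]
  ring

lemma Fbar_real_smul {n d : ℕ} (hd1 : 1 ≤ d) {f : MvPolynomial (Fin n) ℂ}
    (hhom : f.IsHomogeneous d) {s : ℝ} (hs : s ≠ 0) (y : Fin n → ℂ) :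
    Fbar d f ((s : ℂ) • y) = (s : ℂ) ^ (d - 1) • Fbar d f y := by
  unfold Fbar
  have h1 : star ((s : ℂ) • y) = (s : ℂ) • star y := by
    rw [star_smul]
    congr 1
    simp [Complex.conj_ofReal]
  rw [h1, Fmap_smul hd1 hhom (by exact_mod_cast hs) (star y), star_smul]
  congr 1
  simp [star_pow, Complex.conj_ofReal]

lemma Hmap_real_smul {n d : ℕ} (hd1 : 1 ≤ d) {f : MvPolynomial (Fin n) ℂ}
    (hhom : f.IsHomogeneous d) {s : ℝ} (hs : s ≠ 0) (x : Fin n → ℂ) :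
    Hmap d f ((s : ℂ) • x) = ((s ^ ((d - 1) * (d - 1)) : ℝ) : ℂ) • Hmap d f x := by
  unfold Hmap
  rw [Fmap_smul hd1 hhom (by exact_mod_cast hs) x]
  have h1 : (s : ℂ) ^ (d - 1) • Fmap d f x = ((s ^ (d - 1) : ℝ) : ℂ) • Fmap d f x := by
    norm_cast
  rw [h1, Fbar_real_smul hd1 hhom (pow_ne_zero _ hs)]
  congr 1
  push_cast
  rw [← pow_mul]

end Aux

/-- For a nonzero homogeneous `f` of degree `d ≥ 3`: anti-fixed points of `F` are fixed points
of `H`; fixed points of `H` are exactly the solutions of the coupled system `F(x) = y`,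
`F̄(y) = x`; and the complex spectral norm of `f` is the maximum of `|f(x)|/‖x‖₂^d` over the
nonzero fixed points of `H`. -/
theorem stmt5 {n d : ℕ} (hd : 3 ≤ d) (f : MvPolynomial (Fin n) ℂ) (hf : f ≠ 0)
    (hhom : f.IsHomogeneous d) :
    (∀ x : Fin n → ℂ, Fmap d f x = star x → Hmap d f x = x) ∧
    (∀ x : Fin n → ℂ, Hmap d f x = x ↔ ∃ y : Fin n → ℂ, Fmap d f x = y ∧ Fbar d f y = x) ∧
    IsGreatest {r : ℝ | ∃ x : Fin n → ℂ, x ≠ 0 ∧ Hmap d f x = x ∧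
        r = ‖eval x f‖ / euclNorm x ^ d}
      (specNorm f) := by
  have hd1 : 1 ≤ d := by omega
  refine ⟨?_, ?_, ?_⟩
  · intro x hx
    show Fbar d f (Fmap d f x) = x
    rw [hx]
    unfold Fbar
    rw [star_star, hx, star_star]
  · intro x
    constructor
    · intro h
      exact ⟨Fmap d f x, rfl, h⟩
    · rintro ⟨y, hy, h2⟩
      show Fbar d f (Fmap d f x) = x
      rw [hy]
      exact h2
  · obtain ⟨x1, hx1, hspec, hpos, hub⟩ := specNorm_spec hd1 f hf hhom
    set lam : ℝ := specNorm f with hlam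
    have hw : ‖eval x1 f‖ = lam := hspec.symm
    have hwne : eval x1 f ≠ 0 := by
      intro h
      rw [h, norm_zero] at hw
      linarith
    obtain ⟨c, hc⟩ := IsAlgClosed.exists_pow_nat_eq
      ((starRingEnd ℂ) (eval x1 f) / (lam : ℂ)) (show 0 < d by omega)
    have hlamne : lam ≠ 0 := ne_of_gt hpos
    have hlamCne : ((lam : ℝ) : ℂ) ≠ 0 := by exact_mod_cast hlamne
    have habsc : ‖c‖ = 1 := by
      have h1 : ‖c‖ ^ d = 1 := by
        rw [← norm_pow, hc, norm_div, Complex.norm_conj, hw, Complex.norm_real, Real.norm_eq_abs,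
          abs_of_pos hpos, div_self hlamne]
      by_contra hne
      rcases lt_or_gt_of_ne hne with hlt | hgt
      · have h2 : ‖c‖ ^ d < 1 := pow_lt_one₀ (norm_nonneg c) hlt (by omega)
        linarith
      · have h2 : 1 < ‖c‖ ^ d := one_lt_pow₀ hgt (by omega)
        linarith
    set x0 : Fin n → ℂ := c • x1 with hx0def
    have hx0 : euclNorm x0 = 1 := by
      rw [hx0def, euclNorm_smul, habsc, hx1, one_mul]
    have hval : eval x0 f = (lam : ℂ) := by
      rw [hx0def, eval_smul_homog hhom, hc]
      have h2 : (starRingEnd ℂ) (eval x1 f) * eval x1 f = ((lam ^ 2 : ℝ) : ℂ) := by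
        rw [mul_comm, Complex.mul_conj]
        rw [← Complex.sq_norm, hw]

      rw [div_mul_eq_mul_div, h2]
      push_cast
      field_simp
    have hgrad := gradient_condition hd1 hhom hx0 hval hub
    have hdC : (d : ℂ) ≠ 0 := by
      exact_mod_cast (by omega : d ≠ 0)
    have hF : Fmap d f x0 = ((lam : ℝ) : ℂ) • star x0 := by
      funext i
      unfold Fmap
      rw [hgrad i]
      simp only [Pi.smul_apply, Pi.star_apply, smul_eq_mul]
      push_cast
      field_simp
      rw [Complex.star_def]
    have hH0 : Hmap d f x0 = ((lam ^ d : ℝ) : ℂ) • x0 := by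
      show Fbar d f (Fmap d f x0) = _
      rw [hF, Fbar_real_smul hd1 hhom hlamne]
      have hFbarstar : Fbar d f (star x0) = ((lam : ℝ) : ℂ) • x0 := by
        unfold Fbar
        rw [star_star, hF, star_smul, star_star]
        congr 1
        simp [Complex.conj_ofReal]
      rw [hFbarstar, smul_smul]
      congr 1
      push_cast
      rw [← pow_succ]
      congr 1
      omega
    set t : ℝ := lam ^ (-(1 : ℝ) / ((d : ℝ) - 2)) with htdef
    have htpos : 0 < t := Real.rpow_pos_of_pos hpos _
    have htne : t ≠ 0 := ne_of_gt htpos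
    have htC : ((t : ℝ) : ℂ) ≠ 0 := by exact_mod_cast htne
    set x : Fin n → ℂ := ((t : ℝ) : ℂ) • x0 with hxdef
    have hx0ne : x0 ≠ 0 := by
      intro h0
      rw [euclNorm_eq_zero.mpr h0] at hx0
      linarith
    have hxne : x ≠ 0 := by
      rw [hxdef]
      exact smul_ne_zero htC hx0ne
    have hkey : t ^ ((d - 1) * (d - 1)) * lam ^ d = t := by
      have hd2 : (d : ℝ) - 2 ≠ 0 := by
        have h3 : (3 : ℝ) ≤ (d : ℝ) := by exact_mod_cast hd
        linarith
      rw [htdef, ← Real.rpow_natCast (lam ^ (-(1 : ℝ) / ((d : ℝ) - 2))) ((d - 1) * (d - 1)),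
        ← Real.rpow_natCast lam d, ← Real.rpow_mul hpos.le, ← Real.rpow_add hpos]
      congr 1
      have hcast : (((d - 1) * (d - 1) : ℕ) : ℝ) = ((d : ℝ) - 1) * ((d : ℝ) - 1) := by
        push_cast [Nat.cast_sub hd1]
        ring
      rw [hcast]
      field_simp
      ring
    have hHx : Hmap d f x = x := by
      rw [hxdef, Hmap_real_smul hd1 hhom htne, hH0, smul_smul]
      congr 1
      rw [← Complex.ofReal_mul, hkey]
    have hry : euclNorm x = t := by
      rw [hxdef, euclNorm_smul, hx0, Complex.norm_real, Real.norm_eq_abs, abs_of_pos htpos, mul_one]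
    have hratio : specNorm f = ‖eval x f‖ / euclNorm x ^ d := by
      rw [hxdef, eval_smul_homog hhom]
      rw [norm_mul, norm_pow, Complex.norm_real, Real.norm_eq_abs, abs_of_pos htpos, hval, Complex.norm_real, Real.norm_eq_abs,
        abs_of_pos hpos]
      rw [← hxdef, hry, ← hlam]
      field_simp
    refine ⟨⟨x, hxne, hHx, hratio⟩, ?_⟩
    rintro r ⟨y, hyne, hyH, rfl⟩
    have hry2 : 0 < euclNorm y := by
      rcases lt_or_eq_of_le (euclNorm_nonneg y) with h | h
      · exact h
      · exact absurd (euclNorm_eq_zero.mp h.symm) hyne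
    rw [div_le_iff₀ (by positivity)]
    exact hub y
end

section
/- Assume all s_0,…,s_d are real and φ is not of the form A(z²+1)^{d/2} (so z·q(z) − p(z) is not the zero polynomial). Let R′ = {z ∈ ℝ : z·q(z) − p(z) = 0}. Then the real spectral norm of f satisfies ‖f‖_{σ,ℝ} = max{ |s_d| , max{ |φ(z)| / (1+z²)^{d/2} : z ∈ R′ } }. -/
open Polynomial


noncomputable section

/-- `p(z) = Σ_{j=0}^{d-1} C(d-1,j) s_{j+1} z^j`. -/
def pP (d : ℕ) (s : ℕ → ℂ) : Polynomial ℂ :=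
  ∑ j ∈ Finset.range d, Polynomial.C (((d - 1).choose j : ℂ) * s (j + 1)) * Polynomial.X ^ j

/-- `q(z) = Σ_{j=0}^{d-1} C(d-1,j) s_j z^j`. -/
def qP (d : ℕ) (s : ℕ → ℂ) : Polynomial ℂ :=
  ∑ j ∈ Finset.range d, Polynomial.C (((d - 1).choose j : ℂ) * s j) * Polynomial.X ^ j

/-- `φ(z) = Σ_{j=0}^{d} C(d,j) s_j z^j`. -/
def phiP (d : ℕ) (s : ℕ → ℂ) : Polynomial ℂ :=
  ∑ j ∈ Finset.range (d + 1), Polynomial.C ((d.choose j : ℂ) * s j) * Polynomial.X ^ j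

/-- `f(x₁,x₂) = Σ_{j=0}^{d} C(d,j) s_j x₁^{d-j} x₂^j`. -/
def fval (d : ℕ) (s : ℕ → ℂ) (x₁ x₂ : ℂ) : ℂ :=
  ∑ j ∈ Finset.range (d + 1), (d.choose j : ℂ) * s j * x₁ ^ (d - j) * x₂ ^ j

/-- The real spectral norm of the binary form `f` (with real coefficients). -/
def specNorm2R (d : ℕ) (s : ℕ → ℂ) : ℝ :=
  sSup {r : ℝ | ∃ x₁ x₂ : ℝ, x₁ ^ 2 + x₂ ^ 2 = 1 ∧
    r = ‖fval d s (x₁ : ℂ) (x₂ : ℂ)‖}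

def pR (d : ℕ) (t : ℕ → ℝ) : Polynomial ℝ :=
  ∑ j ∈ Finset.range d, C (((d - 1).choose j : ℝ) * t (j + 1)) * X ^ j

def qR (d : ℕ) (t : ℕ → ℝ) : Polynomial ℝ :=
  ∑ j ∈ Finset.range d, C (((d - 1).choose j : ℝ) * t j) * X ^ j

def phiR (d : ℕ) (t : ℕ → ℝ) : Polynomial ℝ :=
  ∑ j ∈ Finset.range (d + 1), C ((d.choose j : ℝ) * t j) * X ^ j

theorem lemA (d : ℕ) (hd : 1 ≤ d) (t : ℕ → ℝ) :
    phiR d t = qR d t + X * pR d t := by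
  obtain ⟨e, rfl⟩ : ∃ e, d = e + 1 := ⟨d - 1, (Nat.succ_pred_eq_of_pos hd).symm⟩
  unfold phiR qR pR
  rw [Finset.sum_range_succ' (fun j => C (((e+1).choose j : ℝ) * t j) * X ^ j),
      Finset.sum_range_succ' (fun j => C ((((e+1) - 1).choose j : ℝ) * t j) * X ^ j),
      Finset.mul_sum]
  simp only [Nat.add_sub_cancel, Nat.choose_succ_succ, Nat.choose_zero_right,
    Nat.cast_add, Nat.cast_one, pow_zero, mul_one]
  have key : ∀ x ∈ Finset.range (e+1),
      C (((e.choose x : ℝ) + (e.choose (x+1) : ℝ)) * t (x + 1)) * X ^ (x + 1)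
      = C ((e.choose (x+1) : ℝ) * t (x+1)) * X ^ (x+1)
        + X * (C ((e.choose x : ℝ) * t (x + 1)) * X ^ x) := by
    intro x _
    rw [add_mul, map_add, add_mul]
    ring
  rw [Finset.sum_congr rfl key, Finset.sum_add_distrib]
  have last : (∑ x ∈ Finset.range (e+1), C ((e.choose (x+1) : ℝ) * t (x+1)) * X ^ (x+1))
      = ∑ x ∈ Finset.range e, C ((e.choose (x+1) : ℝ) * t (x+1)) * X ^ (x+1) := by
    rw [Finset.sum_range_succ]
    simp [Nat.choose_succ_self]
  rw [last]
  ring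

theorem lemB (d : ℕ) (hd : 1 ≤ d) (t : ℕ → ℝ) :
    derivative (phiR d t) = C (d : ℝ) * pR d t := by
  obtain ⟨e, rfl⟩ : ∃ e, d = e + 1 := ⟨d - 1, (Nat.succ_pred_eq_of_pos hd).symm⟩
  unfold phiR pR
  rw [derivative_sum]
  rw [Finset.sum_range_succ' (fun j => derivative (C (((e+1).choose j : ℝ) * t j) * X ^ j))]
  simp only [derivative_C_mul, derivative_X_pow, Nat.add_sub_cancel, pow_zero,
    derivative_one, mul_zero, add_zero, Nat.cast_add, Nat.cast_one]
  rw [Finset.mul_sum]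
  refine Finset.sum_congr rfl fun x _ => ?_
  have hcc : ((e+1) : ℝ) * (e.choose x : ℝ) = ((e+1).choose (x+1) : ℝ) * ((x+1) : ℝ) := by
    have := Nat.add_one_mul_choose_eq e x
    have : (e+1) * e.choose x = (e+1).choose (x+1) * (x+1) := this
    exact_mod_cast congrArg (Nat.cast : ℕ → ℝ) this
  rw [← mul_assoc, ← mul_assoc, ← C_mul, ← C_mul]
  have : (((e + 1).choose (x + 1) : ℝ) * t (x + 1) * ((x:ℝ) + 1)) = ((e:ℝ) + 1) * ((e.choose x : ℝ) * t (x + 1)) := by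
    linear_combination (-(t (x + 1))) * hcc
  rw [this]



theorem mapgen (d : ℕ) (s : ℕ → ℂ) (hs : ∀ j, (s j).im = 0) (n : ℕ) (c : ℕ → ℕ) (o : ℕ) :
    ((∑ j ∈ Finset.range n, C ((c j : ℝ) * (s (j + o)).re) * X ^ j : Polynomial ℝ)).map
      (algebraMap ℝ ℂ)
      = ∑ j ∈ Finset.range n, C ((c j : ℂ) * s (j + o)) * X ^ j := by
  rw [Polynomial.map_sum]
  refine Finset.sum_congr rfl fun j _ => ?_
  simp only [Polynomial.map_mul, Polynomial.map_pow, map_C, map_X]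
  congr 2
  have : s (j + o) = ((s (j + o)).re : ℂ) := Complex.ext rfl (by simp [hs (j + o)])
  rw [this]
  push_cast
  simp

theorem mapP (d : ℕ) (s : ℕ → ℂ) (hs : ∀ j, (s j).im = 0) :
    (pR d (fun j => (s j).re)).map (algebraMap ℝ ℂ) = pP d s := by
  unfold pR pP
  simpa [Nat.add_comm] using mapgen d s hs d (fun j => (d-1).choose j) 1

theorem mapQ (d : ℕ) (s : ℕ → ℂ) (hs : ∀ j, (s j).im = 0) :
    (qR d (fun j => (s j).re)).map (algebraMap ℝ ℂ) = qP d s := by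
  unfold qR qP
  simpa using mapgen d s hs d (fun j => (d-1).choose j) 0

theorem mapPhi (d : ℕ) (s : ℕ → ℂ) (hs : ∀ j, (s j).im = 0) :
    (phiR d (fun j => (s j).re)).map (algebraMap ℝ ℂ) = phiP d s := by
  unfold phiR phiP
  simpa using mapgen d s hs (d+1) (fun j => d.choose j) 0

theorem evalMap (P : Polynomial ℝ) (z : ℝ) :
    (P.map (algebraMap ℝ ℂ)).eval (z : ℂ) = ((P.eval z : ℝ) : ℂ) := by
  rw [Polynomial.eval_map]
  exact Polynomial.eval₂_at_apply (algebraMap ℝ ℂ) z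


theorem fval_zero (d : ℕ) (hd : 1 ≤ d) (s : ℕ → ℂ) (x : ℂ) :
    fval d s 0 x = s d * x ^ d := by
  unfold fval
  rw [Finset.sum_range_succ]
  have hz : ∀ j ∈ Finset.range d,
      (d.choose j : ℂ) * s j * (0:ℂ) ^ (d - j) * x ^ j = 0 := by
    intro j hj
    have : d - j ≠ 0 := Nat.sub_ne_zero_of_lt (Finset.mem_range.mp hj)
    simp [zero_pow this]
  rw [Finset.sum_congr rfl hz]
  simp

theorem fval_param (d : ℕ) (s : ℕ → ℂ) (x z : ℂ) :
    fval d s x (x * z) = x ^ d * (phiP d s).eval z := by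
  unfold fval phiP
  rw [Polynomial.eval_finset_sum, Finset.mul_sum]
  refine Finset.sum_congr rfl fun j hj => ?_
  have hj' : j ≤ d := Nat.le_of_lt_succ (Finset.mem_range.mp hj)
  have hx : x ^ (d - j) * x ^ j = x ^ d := by rw [← pow_add, Nat.sub_add_cancel hj']
  simp only [Polynomial.eval_mul, Polynomial.eval_C, Polynomial.eval_pow, Polynomial.eval_X]
  calc (d.choose j : ℂ) * s j * x ^ (d - j) * (x * z) ^ j
      = (x ^ (d - j) * x ^ j) * ((d.choose j : ℂ) * s j * z ^ j) := by rw [mul_pow]; ring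
    _ = x ^ d * ((d.choose j : ℂ) * s j * z ^ j) := by rw [hx]

theorem Vsq (d : ℕ) (z : ℝ) : ((1 + z^2) ^ ((d:ℝ)/2)) ^ 2 = (1 + z^2) ^ d := by
  have hx : (0:ℝ) ≤ 1 + z^2 := by positivity
  rw [← Real.rpow_natCast ((1 + z^2) ^ ((d:ℝ)/2)) 2, ← Real.rpow_mul hx,
    ← Real.rpow_natCast (1 + z^2) d]
  congr 1
  push_cast
  ring

theorem sqrt_inv_pow (d : ℕ) (z : ℝ) :
    ((Real.sqrt (1 + z^2))⁻¹) ^ d = ((1 + z^2) ^ ((d:ℝ)/2))⁻¹ := by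
  have hx : (0:ℝ) ≤ 1 + z^2 := by positivity
  rw [inv_pow]
  congr 1
  rw [Real.sqrt_eq_rpow, ← Real.rpow_natCast ((1+z^2) ^ ((1:ℝ)/2)) d, ← Real.rpow_mul hx]
  congr 1
  ring

theorem isGreatest_spec (d : ℕ) (s : ℕ → ℂ) :
    IsGreatest {r : ℝ | ∃ x₁ x₂ : ℝ, x₁ ^ 2 + x₂ ^ 2 = 1 ∧
      r = ‖fval d s (x₁ : ℂ) (x₂ : ℂ)‖} (specNorm2R d s) := by
  set S := {r : ℝ | ∃ x₁ x₂ : ℝ, x₁ ^ 2 + x₂ ^ 2 = 1 ∧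
      r = ‖fval d s (x₁ : ℂ) (x₂ : ℂ)‖} with hS
  have himg : S = (fun p : ℝ × ℝ => ‖fval d s (p.1 : ℂ) (p.2 : ℂ)‖) ''
      {p : ℝ × ℝ | p.1 ^ 2 + p.2 ^ 2 = 1} := by
    ext r
    constructor
    · rintro ⟨a, b, hab, rfl⟩; exact ⟨(a, b), hab, rfl⟩
    · rintro ⟨⟨a, b⟩, hab, rfl⟩; exact ⟨a, b, hab, rfl⟩
  have hK : IsCompact {p : ℝ × ℝ | p.1 ^ 2 + p.2 ^ 2 = 1} := by
    refine Metric.isCompact_of_isClosed_isBounded ?_ ?_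
    · exact isClosed_eq (by fun_prop) continuous_const
    · refine (Metric.isBounded_iff_subset_closedBall 0).mpr ⟨1, fun p hp => ?_⟩
      simp only [Set.mem_setOf_eq] at hp
      have h1 : p.1 ^ 2 ≤ 1 := by nlinarith [sq_nonneg p.2]
      have h2 : p.2 ^ 2 ≤ 1 := by nlinarith [sq_nonneg p.1]
      have h1' : |p.1| ≤ 1 := abs_le_one_iff_mul_self_le_one.mpr (by nlinarith)
      have h2' : |p.2| ≤ 1 := abs_le_one_iff_mul_self_le_one.mpr (by nlinarith)
      simp only [Metric.mem_closedBall, Prod.dist_eq, dist_zero_right, Real.norm_eq_abs]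
      exact max_le h1' h2'
  have hcont : Continuous fun p : ℝ × ℝ => ‖fval d s (p.1 : ℂ) (p.2 : ℂ)‖ := by
    have hc : Continuous fun p : ℝ × ℝ => fval d s (p.1 : ℂ) (p.2 : ℂ) := by
      unfold fval; fun_prop
    exact continuous_norm.comp hc
  have hKS : IsCompact S := himg ▸ hK.image hcont
  have hne : S.Nonempty := ⟨‖fval d s 1 0‖, 1, 0, by norm_num, by norm_num⟩
  exact ⟨hKS.sSup_mem hne, fun x hx => le_csSup hKS.bddAbove hx⟩

theorem abs_eval_phi (d : ℕ) (s : ℕ → ℂ) (hs : ∀ j, (s j).im = 0) (z : ℝ) :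
    ‖(phiP d s).eval (z : ℂ)‖ = |(phiR d (fun j => (s j).re)).eval z| := by
  rw [← mapPhi d s hs, evalMap, Complex.norm_real, Real.norm_eq_abs]

theorem mem_S_of_z (d : ℕ) (s : ℕ → ℂ) (z : ℝ) :
    ∃ x₁ x₂ : ℝ, x₁ ^ 2 + x₂ ^ 2 = 1 ∧
      ‖(phiP d s).eval (z : ℂ)‖ / (1 + z ^ 2) ^ ((d:ℝ)/2)
        = ‖fval d s (x₁ : ℂ) (x₂ : ℂ)‖ := by
  have hv : (0:ℝ) < 1 + z ^ 2 := by positivity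
  have hsq : Real.sqrt (1 + z ^ 2) ^ 2 = 1 + z ^ 2 := Real.sq_sqrt hv.le
  have hsqpos : 0 < Real.sqrt (1 + z ^ 2) := Real.sqrt_pos.mpr hv
  set a : ℝ := (Real.sqrt (1 + z ^ 2))⁻¹ with ha
  refine ⟨a, z * a, ?_, ?_⟩
  · rw [ha, mul_pow, inv_pow, hsq, ← one_add_mul, mul_inv_cancel₀ hv.ne']
  · have hcast : ((z * a : ℝ) : ℂ) = (a : ℂ) * (z : ℂ) := by push_cast; ring
    rw [hcast, fval_param, norm_mul, norm_pow, Complex.norm_real, Real.norm_eq_abs,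
      abs_of_pos (by positivity : (0:ℝ) < a), ha, sqrt_inv_pow]
    rw [div_eq_mul_inv, mul_comm]

theorem eq_one_of_sq_eq_one {x : ℝ} (h : x ^ 2 = 1) (hx : 0 ≤ x) : x = 1 := by
  have h2 : (x - 1) * (x + 1) = 0 := by ring_nf; linarith
  rcases mul_eq_zero.mp h2 with h3 | h3
  · linarith
  · linarith

/-- For real coefficients `s` with `φ` not of the exceptional form `A (z²+1)^{d/2}`,
`‖f‖_{σ,ℝ} = max { |s_d|, max_{z ∈ R'} |φ(z)|/(1+z²)^{d/2} }`, where `R'` is the set of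
real roots of `z q(z) - p(z)`. -/
theorem stmt15 (d : ℕ) (hd : 3 ≤ d) (s : ℕ → ℂ) (hs : ∀ j, (s j).im = 0)
    (h : ¬ (Even d ∧ ∃ A : ℝ, phiP d s =
      Polynomial.C (A : ℂ) * (Polynomial.X ^ 2 + 1) ^ (d / 2))) :
    IsGreatest (({‖s d‖} : Set ℝ) ∪
        {r : ℝ | ∃ z : ℝ, (Polynomial.X * qP d s - pP d s).eval (z : ℂ) = 0 ∧
          r = ‖(phiP d s).eval (z : ℂ)‖ / (1 + z ^ 2) ^ ((d : ℝ) / 2)})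
      (specNorm2R d s) := by
  have hd1 : 1 ≤ d := by omega
  set t : ℕ → ℝ := fun j => (s j).re with ht
  have hMg := isGreatest_spec d s
  set M := specNorm2R d s with hM
  have hsd : ‖s d‖ ∈ {r : ℝ | ∃ x₁ x₂ : ℝ, x₁ ^ 2 + x₂ ^ 2 = 1 ∧
      r = ‖fval d s (x₁ : ℂ) (x₂ : ℂ)‖} := by
    refine ⟨0, 1, by norm_num, ?_⟩
    push_cast
    rw [fval_zero d hd1 s 1]
    simp
  have hGz : ∀ z : ℝ, ‖(phiP d s).eval (z : ℂ)‖ / (1 + z ^ 2) ^ ((d:ℝ)/2)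
      ∈ {r : ℝ | ∃ x₁ x₂ : ℝ, x₁ ^ 2 + x₂ ^ 2 = 1 ∧
        r = ‖fval d s (x₁ : ℂ) (x₂ : ℂ)‖} := by
    intro z
    obtain ⟨a, b, hab, he⟩ := mem_S_of_z d s z
    exact ⟨a, b, hab, he⟩
  constructor
  · -- membership
    obtain ⟨a, b, hab, hMe⟩ := hMg.1
    by_cases ha : a = 0
    · refine Set.mem_union_left _ (Set.mem_singleton_iff.mpr ?_)
      subst ha
      have hb2 : b ^ 2 = 1 := by linarith
      have hbabs : |b| = 1 := eq_one_of_sq_eq_one (by rw [sq_abs]; exact hb2) (abs_nonneg b)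
      rw [hMe]
      push_cast
      rw [fval_zero d hd1 s b, norm_mul, norm_pow, Complex.norm_real, Real.norm_eq_abs, hbabs, one_pow, mul_one]
    · set z₀ := b / a with hz0
      have hbz : b = a * z₀ := by rw [hz0, mul_div_cancel₀ b ha]
      have hcast : ((b:ℝ):ℂ) = (a:ℂ) * (z₀:ℂ) := by rw [hbz]; push_cast; ring
      have hv : (0:ℝ) < 1 + z₀ ^ 2 := by positivity
      have hva : a ^ 2 * (1 + z₀ ^ 2) = 1 := by
        have h1 : a ^ 2 * (1 + z₀ ^ 2) = a ^ 2 + b ^ 2 := by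
          rw [hz0]; field_simp
        rw [h1, hab]
      have h3 : Real.sqrt (1 + z₀ ^ 2) * |a| = 1 := by
        refine eq_one_of_sq_eq_one ?_ (by positivity)
        rw [mul_pow, Real.sq_sqrt hv.le, sq_abs]
        linarith [hva]
      have haabs : |a| = (Real.sqrt (1 + z₀ ^ 2))⁻¹ :=
        eq_inv_of_mul_eq_one_left (by rw [mul_comm]; exact h3)
      have hMz : M = ‖(phiP d s).eval (z₀ : ℂ)‖ / (1 + z₀ ^ 2) ^ ((d:ℝ)/2) := by
        rw [hMe, hcast, fval_param, norm_mul, norm_pow, Complex.norm_real, Real.norm_eq_abs, haabs,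
          sqrt_inv_pow]
        ring
      by_cases hMsd : M = ‖s d‖
      · exact Set.mem_union_left _ (Set.mem_singleton_iff.mpr hMsd)
      · refine Set.mem_union_right _ ⟨z₀, ?_, hMz⟩
        have hsdM : ‖s d‖ ≤ M := hMg.2 hsd
        have hMu : ∀ z : ℝ, |(phiR d t).eval z| / (1 + z ^ 2) ^ ((d:ℝ)/2) ≤ M := by
          intro z
          have h5 := hMg.2 (hGz z)
          rwa [abs_eval_phi d s hs z] at h5
        have hMz' : M = |(phiR d t).eval z₀| / (1 + z₀ ^ 2) ^ ((d:ℝ)/2) := by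
          rw [hMz, abs_eval_phi d s hs z₀]
        have hu0 : (phiR d t).eval z₀ ≠ 0 := by
          intro h0
          apply hMsd
          have h1 : M = 0 := by rw [hMz', h0]; simp
          have h2 : ‖s d‖ = 0 :=
            le_antisymm (h1 ▸ hsdM) (norm_nonneg _)
          rw [h1, h2]
        have hF2le : ∀ z : ℝ, (fun z : ℝ => ((phiR d t).eval z) ^ 2 / (1 + z ^ 2) ^ d) z
            ≤ (fun z : ℝ => ((phiR d t).eval z) ^ 2 / (1 + z ^ 2) ^ d) z₀ := by
          intro z
          have hGle : |(phiR d t).eval z| / (1 + z ^ 2) ^ ((d:ℝ)/2)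
              ≤ |(phiR d t).eval z₀| / (1 + z₀ ^ 2) ^ ((d:ℝ)/2) := hMz' ▸ hMu z
          have hnn : 0 ≤ |(phiR d t).eval z| / (1 + z ^ 2) ^ ((d:ℝ)/2) := by positivity
          have hsq := pow_le_pow_left₀ hnn hGle 2
          rwa [div_pow, div_pow, Vsq, Vsq, sq_abs, sq_abs] at hsq
        have hloc : IsLocalMax (fun z : ℝ => ((phiR d t).eval z) ^ 2 / (1 + z ^ 2) ^ d) z₀ :=
          Filter.Eventually.of_forall hF2le
        have hu' : HasDerivAt (fun z : ℝ => (phiR d t).eval z)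
            ((derivative (phiR d t)).eval z₀) z₀ := (phiR d t).hasDerivAt z₀
        have hu2 : HasDerivAt (fun z : ℝ => ((phiR d t).eval z) ^ 2)
            (2 * (phiR d t).eval z₀ * ((derivative (phiR d t)).eval z₀)) z₀ := by
          simpa using hu'.fun_pow 2
        have hw : HasDerivAt (fun z : ℝ => 1 + z ^ 2) (2 * z₀) z₀ := by
          simpa using (hasDerivAt_pow 2 z₀).const_add 1
        have hvpow : HasDerivAt (fun z : ℝ => (1 + z ^ 2) ^ d)
            ((d:ℝ) * (1 + z₀ ^ 2) ^ (d - 1) * (2 * z₀)) z₀ := hw.pow d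
        have hvne : ((1:ℝ) + z₀ ^ 2) ^ d ≠ 0 := by positivity
        have hdiv := hu2.div hvpow hvne
        have hD0 := hloc.hasDerivAt_eq_zero hdiv
        rw [_root_.div_eq_zero_iff] at hD0
        have hnum : 2 * (phiR d t).eval z₀ * ((derivative (phiR d t)).eval z₀) *
            (1 + z₀ ^ 2) ^ d - ((phiR d t).eval z₀) ^ 2 *
            ((d:ℝ) * (1 + z₀ ^ 2) ^ (d - 1) * (2 * z₀)) = 0 := by
          rcases hD0 with h6 | h6
          · exact h6
          · exact absurd h6 (by positivity)
        have hder : (derivative (phiR d t)).eval z₀ = (d:ℝ) * (pR d t).eval z₀ := by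
          rw [lemB d hd1 t]; simp
        have huQP : (phiR d t).eval z₀ = (qR d t).eval z₀ + z₀ * (pR d t).eval z₀ := by
          rw [lemA d hd1 t]; simp
        have hvd : ((1:ℝ) + z₀ ^ 2) ^ d = (1 + z₀ ^ 2) ^ (d - 1) * (1 + z₀ ^ 2) := by
          rw [← pow_succ]; congr 1; omega
        rw [hder, hvd] at hnum
        have key : (2 * (d:ℝ) * (1 + z₀ ^ 2) ^ (d - 1) * ((phiR d t).eval z₀)) *
            ((pR d t).eval z₀ * (1 + z₀ ^ 2) - z₀ * (phiR d t).eval z₀) = 0 := by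
          linear_combination hnum
        have hdpos : (0:ℝ) < (d:ℝ) := by exact_mod_cast (by omega : 0 < d)
        have hfac : (pR d t).eval z₀ * (1 + z₀ ^ 2) - z₀ * (phiR d t).eval z₀ = 0 := by
          rcases mul_eq_zero.mp key with h7 | h7
          · exfalso
            rcases mul_eq_zero.mp h7 with h8 | h8
            · have : (0:ℝ) < 2 * (d:ℝ) * (1 + z₀ ^ 2) ^ (d - 1) := by positivity
              linarith
            · exact hu0 h8
          · exact h7
        have hPQ : (pR d t).eval z₀ = z₀ * (qR d t).eval z₀ := by
          rw [huQP] at hfac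
          linear_combination hfac
        rw [Polynomial.eval_sub, Polynomial.eval_mul, Polynomial.eval_X,
          ← mapQ d s hs, ← mapP d s hs, evalMap, evalMap]
        rw [show (fun j => (s j).re) = t from rfl, hPQ]
        push_cast
        ring
  · rintro r (hr | ⟨z, hz, rfl⟩)
    · rw [Set.mem_singleton_iff.mp hr]
      exact hMg.2 hsd
    · exact hMg.2 (hGz z)


end
end
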